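/- Let A be the algebra generated by a in which every word containing two or more subwords a² is zero. If f is a multilinear nonassociative polynomial that is alternating in three of its variables, then f is a polynomial identity of A. -/

import Mathlib

noncomputable section

open Filter Topology

/-- Is a free-magma element a single leaf? -/
def FreeMagma.isLeaf {X : Type*} : FreeMagma X → Bool
  | .of _ => true
  | .mul _ _ => false

/-- The number of occurrences of the subword `a·a` in a monomial in one generator `a`. -/
def countSq : FreeMagma Unit → ℕ
  | .of _ => 0
  | .mul x y => countSq x + countSq y + (if x.isLeaf && y.isLeaf then 1 else 0)

variable (F : Type) [Field F] [CharZero F]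

/-- The free nonassociative (non-unital) algebra on one generator `a`. -/
abbrev FA := FreeNonUnitalNonAssocAlgebra F Unit

/-- The monomial of `FA F` corresponding to a magma word. -/
def mono (m : FreeMagma Unit) : FA F := MonoidAlgebra.single m (1 : F)

/-- The relations ideal of `A`: the span of all monomials containing two or more
subwords equal to `a²`.  The algebra `A` of the paper is `FA F` modulo `relI F`. -/
def relI : Submodule F (FA F) :=
  Submodule.span F {x : FA F | ∃ m : FreeMagma Unit, 2 ≤ countSq m ∧ x = mono F m}

/-- Number of occurrences of the variable `i` in a magma word over `ℕ`. -/
def occ : FreeMagma ℕ → ℕ → ℕ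
  | .of j, i => if j = i then 1 else 0
  | .mul x y, i => occ x i + occ y i

/-- The free nonassociative algebra on countably many variables `x₀, x₁, …`. -/
abbrev FreeN := FreeNonUnitalNonAssocAlgebra F ℕ

/-- The monomial of `FreeN F` corresponding to a magma word. -/
def monoN (t : FreeMagma ℕ) : FreeN F := MonoidAlgebra.single t (1 : F)

/-- `P_n`: the space of multilinear polynomials in the variables `x₀, …, x_{n-1}`. -/
def Pmulti (n : ℕ) : Submodule F (FreeN F) :=
  Submodule.span F {x : FreeN F | ∃ t : FreeMagma ℕ,
    (∀ i : ℕ, occ t i = if i < n then 1 else 0) ∧ x = monoN F t}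

/-- The identities of the algebra `A = FA F / relI F`: polynomials vanishing under every
substitution of elements of `A`. -/
def IdA : Submodule F (FreeN F) :=
  ⨅ xs : ℕ → FA F,
    Submodule.comap (FreeNonUnitalNonAssocAlgebra.lift F xs : FreeN F →ₗ[F] FA F) (relI F)

/-- The `n`-th codimension of `A`: the dimension of `P_n/(P_n ∩ Id(A))`. -/
def codimA (n : ℕ) : ℕ :=
  Module.finrank F (↥(Pmulti F n) ⧸ Submodule.comap (Pmulti F n).subtype (IdA F))

/-- Renaming of variables: the algebra endomorphism of `FreeN F` induced by `σ : ℕ → ℕ`. -/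
def renameVars (σ : ℕ → ℕ) : FreeN F →ₙₐ[F] FreeN F :=
  FreeNonUnitalNonAssocAlgebra.lift F (fun i => FreeNonUnitalNonAssocAlgebra.of F (σ i))

namespace Aux3

open FreeNonUnitalNonAssocAlgebra Function

/-- substitution of one-variable words into a magma word -/
def subW (u : ℕ → FreeMagma Unit) : FreeMagma ℕ → FreeMagma Unit
  | .of i => u i
  | .mul x y => .mul (subW u x) (subW u y)

lemma cherry (w : FreeMagma Unit) (h : countSq w = 0) : w = .of () := by
  induction w with
  | ih1 x => cases x; rfl
  | ih2 x y ihx ihy =>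
    simp only [countSq] at h
    obtain ⟨h12, he⟩ := Nat.add_eq_zero.mp h
    obtain ⟨h1, h2⟩ := Nat.add_eq_zero.mp h12
    rw [ihx h1, ihy h2] at he
    simp [FreeMagma.isLeaf] at he

lemma countSq_pos (w : FreeMagma Unit) (h : w ≠ .of ()) : 1 ≤ countSq w :=
  Nat.pos_of_ne_zero fun h0 => h (cherry w h0)

lemma sub1 (u : ℕ → FreeMagma Unit) (i : ℕ) :
    ∀ t : FreeMagma ℕ, 1 ≤ occ t i → countSq (u i) ≤ countSq (subW u t) := by
  intro t
  induction t with
  | ih1 m =>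
    intro h
    simp only [occ] at h
    split at h
    · next hm => subst hm; exact le_of_eq rfl
    · omega
  | ih2 x y ihx ihy =>
    intro h
    simp only [occ] at h
    simp only [subW, countSq]
    rcases Nat.lt_or_ge (occ x i) 1 with hx | hx
    · have := ihy (by omega); omega
    · have := ihx hx; omega

lemma sub2 (u : ℕ → FreeMagma Unit) (i j : ℕ) (hij : i ≠ j) :
    ∀ t : FreeMagma ℕ, 1 ≤ occ t i → 1 ≤ occ t j →
      countSq (u i) + countSq (u j) ≤ countSq (subW u t) := by
  intro t
  induction t with
  | ih1 m =>
    intro h1 h2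
    simp only [occ] at h1 h2
    split at h1
    · next hm =>
      subst hm
      split at h2
      · next hm2 => exact absurd hm2 hij
      · omega
    · omega
  | ih2 x y ihx ihy =>
    intro h1 h2
    simp only [occ] at h1 h2
    simp only [subW, countSq]
    rcases Nat.lt_or_ge (occ x i) 1 with hxi | hxi <;>
      rcases Nat.lt_or_ge (occ x j) 1 with hxj | hxj
    · have := ihy (by omega) (by omega); omega
    · have := sub1 u j x hxj
      have := sub1 u i y (by omega)
      omega
    · have := sub1 u i x hxi
      have := sub1 u j y (by omega)
      omega
    · have := ihx hxi hxj; omega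

/-- evaluation of a magma word -/
def evalW (xs : ℕ → FA F) : FreeMagma ℕ → FA F
  | .of i => xs i
  | .mul x y => evalW xs x * evalW xs y

lemma monoN_of (i : ℕ) : monoN F (.of i) = of F i := rfl

lemma monoN_mul (x y : FreeMagma ℕ) : monoN F (x * y) = monoN F x * monoN F y := by
  simp only [monoN]
  rw [MonoidAlgebra.single_mul_single, one_mul]

lemma lift_monoN (xs : ℕ → FA F) (t : FreeMagma ℕ) :
    lift F xs (monoN F t) = evalW F xs t := by
  induction t with
  | ih1 i => rw [monoN_of, lift_of_apply]; rfl
  | ih2 x y ihx ihy => rw [monoN_mul, map_mul, ihx, ihy]; rfl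

lemma evalW_mono (u : ℕ → FreeMagma Unit) (t : FreeMagma ℕ) :
    evalW F (fun l => mono F (u l)) t = mono F (subW u t) := by
  induction t with
  | ih1 i => rfl
  | ih2 x y ihx ihy =>
    show evalW F _ x * evalW F _ y = _
    rw [ihx, ihy]
    simp only [mono]
    rw [MonoidAlgebra.single_mul_single, one_mul]
    rfl

lemma evalW_congr (xs ys : ℕ → FA F) (t : FreeMagma ℕ)
    (h : ∀ m, 1 ≤ occ t m → xs m = ys m) : evalW F xs t = evalW F ys t := by
  induction t with
  | ih1 i => exact h i (by simp [occ])
  | ih2 x y ihx ihy =>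
    simp only [evalW]
    rw [ihx fun m hm => h m (by simp only [occ]; omega),
        ihy fun m hm => h m (by simp only [occ]; omega)]

lemma evalW_update_add (xs : ℕ → FA F) (l : ℕ) (v w : FA F) :
    ∀ t : FreeMagma ℕ, occ t l = 1 →
      evalW F (update xs l (v + w)) t
        = evalW F (update xs l v) t + evalW F (update xs l w) t := by
  intro t
  induction t with
  | ih1 m =>
    intro h
    simp only [occ] at h
    have hm : m = l := by by_contra hc; simp [hc] at h
    subst hm
    simp [evalW, update_self]
  | ih2 x y ihx ihy =>
    intro h
    simp only [occ] at h
    simp only [evalW]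
    rcases Nat.lt_or_ge (occ x l) 1 with hx | hx
    · have hx0 : occ x l = 0 := by omega
      have hcong : ∀ (a b : FA F),
          evalW F (update xs l a) x = evalW F (update xs l b) x := fun a b =>
        evalW_congr F _ _ x fun m hm => by
          have : m ≠ l := fun he => by subst he; omega
          simp [update_of_ne this]
      rw [ihy (by omega), hcong (v + w) v, hcong w v, mul_add]
    · have hy0 : occ y l = 0 := by omega
      have hcong : ∀ (a b : FA F),
          evalW F (update xs l a) y = evalW F (update xs l b) y := fun a b =>
        evalW_congr F _ _ y fun m hm => by
          have : m ≠ l := fun he => by subst he; omega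
          simp [update_of_ne this]
      rw [ihx (by omega), hcong (v + w) v, hcong w v, add_mul]

lemma evalW_update_smul (xs : ℕ → FA F) (l : ℕ) (c : F) (v : FA F) :
    ∀ t : FreeMagma ℕ, occ t l = 1 →
      evalW F (update xs l (c • v)) t = c • evalW F (update xs l v) t := by
  intro t
  induction t with
  | ih1 m =>
    intro h
    simp only [occ] at h
    have hm : m = l := by by_contra hc; simp [hc] at h
    subst hm
    simp [evalW, update_self]
  | ih2 x y ihx ihy =>
    intro h
    simp only [occ] at h
    simp only [evalW]
    rcases Nat.lt_or_ge (occ x l) 1 with hx | hx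
    · have hcong : ∀ (a b : FA F),
          evalW F (update xs l a) x = evalW F (update xs l b) x := fun a b =>
        evalW_congr F _ _ x fun m hm => by
          have : m ≠ l := fun he => by subst he; omega
          simp [update_of_ne this]
      rw [ihy (by omega), hcong (c • v) v, mul_smul_comm]
    · have hcong : ∀ (a b : FA F),
          evalW F (update xs l a) y = evalW F (update xs l b) y := fun a b =>
        evalW_congr F _ _ y fun m hm => by
          have : m ≠ l := fun he => by subst he; omega
          simp [update_of_ne this]
      rw [ihx (by omega), hcong (c • v) v, smul_mul_assoc]

lemma lift_update_add {n : ℕ} {f : FreeN F} (hf : f ∈ Pmulti F n) (l : ℕ) (hl : l < n)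
    (xs : ℕ → FA F) (v w : FA F) :
    lift F (update xs l (v + w)) f
      = lift F (update xs l v) f + lift F (update xs l w) f := by
  refine Submodule.span_induction (p := fun g _ => lift F (update xs l (v + w)) g
      = lift F (update xs l v) g + lift F (update xs l w) g) ?_ (by simp) ?_ ?_ hf
  · rintro x ⟨t, ht, rfl⟩
    rw [lift_monoN, lift_monoN, lift_monoN]
    exact evalW_update_add F xs l v w t (by rw [ht l, if_pos hl])
  · intro a b _ _ ha hb
    simp only [map_add, ha, hb]
    abel
  · intro c a _ ha
    simp only [map_smul, ha, smul_add]

lemma lift_update_smul {n : ℕ} {f : FreeN F} (hf : f ∈ Pmulti F n) (l : ℕ) (hl : l < n)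
    (xs : ℕ → FA F) (c : F) (v : FA F) :
    lift F (update xs l (c • v)) f = c • lift F (update xs l v) f := by
  refine Submodule.span_induction (p := fun g _ => lift F (update xs l (c • v)) g
      = c • lift F (update xs l v) g) ?_ (by simp) ?_ ?_ hf
  · rintro x ⟨t, ht, rfl⟩
    rw [lift_monoN, lift_monoN]
    exact evalW_update_smul F xs l c v t (by rw [ht l, if_pos hl])
  · intro a b _ _ ha hb
    simp only [map_add, ha, hb, smul_add]
  · intro d a _ ha
    simp only [map_smul, ha, smul_smul, mul_comm c d]

lemma lift_update_zero {n : ℕ} {f : FreeN F} (hf : f ∈ Pmulti F n) (l : ℕ) (hl : l < n)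
    (xs : ℕ → FA F) : lift F (update xs l 0) f = 0 := by
  have h0 : update xs l (0 : FA F) = update xs l ((0 : F) • (0 : FA F)) := by rw [zero_smul]
  rw [h0, lift_update_smul F hf l hl xs, zero_smul]

lemma lift_rename (ys : ℕ → FA F) (σ : ℕ → ℕ) (g : FreeN F) :
    lift F ys (renameVars F σ g) = lift F (fun m => ys (σ m)) g := by
  have h : (lift F ys).comp (renameVars F σ) = lift F (fun m => ys (σ m)) := by
    apply FreeNonUnitalNonAssocAlgebra.hom_ext
    intro x
    simp [renameVars, lift_of_apply]
  exact DFunLike.congr_fun h g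

lemma alt_zero {f : FreeN F} (ys : ℕ → FA F) (σ : ℕ → ℕ)
    (hσ : renameVars F σ f = -f) (hys : ∀ m, ys (σ m) = ys m) : lift F ys f = 0 := by
  have hyseq : (fun m => ys (σ m)) = ys := funext hys
  have h1 : lift F ys f = -(lift F ys f) := by
    conv_lhs => rw [← hyseq]
    rw [← lift_rename, hσ, map_neg]
  have h2 : (2 : F) • lift F ys f = 0 := by
    rw [two_smul]
    nth_rewrite 2 [h1]
    exact add_neg_cancel _
  have := congrArg (fun z => (2 : F)⁻¹ • z) h2
  simpa [smul_smul] using this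

lemma lift_mono_mem {n : ℕ} {f : FreeN F} (hf : f ∈ Pmulti F n)
    (u : ℕ → FreeMagma Unit) (p q : ℕ) (hpq : p ≠ q) (hp : p < n) (hq : q < n)
    (hcp : 1 ≤ countSq (u p)) (hcq : 1 ≤ countSq (u q)) :
    lift F (fun m => mono F (u m)) f ∈ relI F := by
  refine Submodule.span_induction
    (p := fun g _ => lift F (fun m => mono F (u m)) g ∈ relI F) ?_ (zero_mem _) ?_ ?_ hf
  · rintro x ⟨t, ht, rfl⟩
    rw [lift_monoN, evalW_mono]
    apply Submodule.subset_span
    refine ⟨subW u t, ?_, rfl⟩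
    have h2 := sub2 u p q hpq t (by rw [ht p, if_pos hp]) (by rw [ht q, if_pos hq])
    omega
  · intro a b _ _ ha hb
    rw [map_add]; exact add_mem ha hb
  · intro c a _ ha
    rw [map_smul]; exact Submodule.smul_mem _ _ ha

end Aux3

open Aux3 Function

/-- a multilinear polynomial alternating in three of its variables is an
identity of `A`. -/
theorem alternating_three_is_identity (n : ℕ) (f : FreeN F) (hf : f ∈ Pmulti F n)
    (i j k : ℕ) (hi : i < n) (hj : j < n) (hk : k < n)
    (hij : i ≠ j) (hjk : j ≠ k) (hik : i ≠ k)
    (altij : renameVars F (Equiv.swap i j) f = -f)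
    (altjk : renameVars F (Equiv.swap j k) f = -f)
    (altik : renameVars F (Equiv.swap i k) f = -f) :
    f ∈ IdA F := by
  rw [IdA, Submodule.mem_iInf]
  intro xs0
  rw [Submodule.mem_comap]
  show FreeNonUnitalNonAssocAlgebra.lift F xs0 f ∈ relI F
  suffices key : ∀ d l, n ≤ l + d → ∀ xs : ℕ → FA F,
      (∀ m, m < l → ∃ w, xs m = mono F w) →
      FreeNonUnitalNonAssocAlgebra.lift F xs f ∈ relI F by
    exact key n 0 (by omega) xs0 (fun m hm => absurd hm (Nat.not_lt_zero m))
  intro d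
  induction d with
  | succ d ihd =>
    intro l hnl xs hxs
    by_cases hln : n ≤ l
    · exact ihd l (by omega) xs hxs
    · have hl : l < n := by omega
      have main : ∀ v : FA F,
          FreeNonUnitalNonAssocAlgebra.lift F (update xs l v) f ∈ relI F := by
        intro v
        induction v using MonoidAlgebra.induction with
        | zero =>
          rw [lift_update_zero F hf l hl xs]
          exact zero_mem _
        | single_add a b v hsupp hb ihv =>
          rw [lift_update_add F hf l hl xs (MonoidAlgebra.single a b) v]
          refine add_mem ?_ ihv
          have hba : (MonoidAlgebra.single a b : FA F) = b • mono F a := by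
            simp [mono, MonoidAlgebra.smul_single']
          rw [hba, lift_update_smul F hf l hl xs b (mono F a)]
          refine Submodule.smul_mem _ _ ?_
          refine ihd (l + 1) (by omega) (update xs l (mono F a)) (fun m hm => ?_)
          rcases Nat.lt_or_ge m l with h | h
          · obtain ⟨w, hw⟩ := hxs m h
            exact ⟨w, by rw [update_of_ne (by omega)]; exact hw⟩
          · have hml : m = l := by omega
            subst hml
            exact ⟨a, by rw [update_self]⟩
      have := main (xs l)
      rwa [Function.update_eq_self] at this
  | zero =>
    intro l hnl xs hxs
    have hxs' : ∀ m, m < n → ∃ w, xs m = mono F w := fun m hm => hxs m (by omega)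
    set u : ℕ → FreeMagma Unit :=
      fun m => if h : m < n then Classical.choose (hxs' m h) else .of () with hu_def
    have hu : ∀ m, m < n → xs m = mono F (u m) := fun m hm => by
      simp only [hu_def, dif_pos hm]
      exact Classical.choose_spec (hxs' m hm)
    have hxy : FreeNonUnitalNonAssocAlgebra.lift F xs f
        = FreeNonUnitalNonAssocAlgebra.lift F (fun m => mono F (u m)) f := by
      refine Submodule.span_induction (p := fun g _ =>
        FreeNonUnitalNonAssocAlgebra.lift F xs g
          = FreeNonUnitalNonAssocAlgebra.lift F (fun m => mono F (u m)) g)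
        ?_ (by simp) ?_ ?_ hf
      · rintro x ⟨t, ht, rfl⟩
        rw [lift_monoN, lift_monoN]
        refine evalW_congr F xs _ t fun m hm => ?_
        have hmn : m < n := by
          by_contra hc
          rw [ht m, if_neg hc] at hm
          omega
        exact hu m hmn
      · intro a b _ _ ha hb
        rw [map_add, map_add, ha, hb]
      · intro c a _ ha
        rw [map_smul, map_smul, ha]
    rw [hxy]
    have swap_case : ∀ p q : ℕ, u p = u q →
        renameVars F (Equiv.swap p q) f = -f →
        FreeNonUnitalNonAssocAlgebra.lift F (fun m => mono F (u m)) f ∈ relI F := by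
      intro p q hpq halt
      have hz := alt_zero F (fun m => mono F (u m)) (Equiv.swap p q) halt ?_
      · rw [hz]; exact zero_mem _
      · intro m
        rcases eq_or_ne m p with rfl | hmp
        · simp [Equiv.swap_apply_left, hpq]
        rcases eq_or_ne m q with rfl | hmq
        · simp [Equiv.swap_apply_right, hpq]
        · simp [Equiv.swap_apply_of_ne_of_ne hmp hmq]
    by_cases h1 : u i = u j
    · exact swap_case i j h1 altij
    by_cases h2 : u j = u k
    · exact swap_case j k h2 altjk
    by_cases h3 : u i = u k
    · exact swap_case i k h3 altik
    by_cases hli : u i = .of ()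
    · exact lift_mono_mem F hf u j k hjk hj hk
        (countSq_pos _ fun e => h1 (hli.trans e.symm))
        (countSq_pos _ fun e => h3 (hli.trans e.symm))
    by_cases hlj : u j = .of ()
    · exact lift_mono_mem F hf u i k hik hi hk (countSq_pos _ hli)
        (countSq_pos _ fun e => h2 (hlj.trans e.symm))
    · exact lift_mono_mem F hf u i j hij hi hj (countSq_pos _ hli) (countSq_pos _ hlj)
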